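/- Every tournament on n ≥ 1 vertices contains a Hamiltonian directed path (Rédei's theorem). -/

import Mathlib

/-- A set `W` of vertices is acyclic if the digraph `r` restricted to `W`
has no directed cycle (the transitive closure restricted to `W` is irreflexive). -/
def AcyclicOn {V : Type*} (r : V → V → Prop) (W : Set V) : Prop :=
  ∀ v : V, ¬ Relation.TransGen (fun a b => a ∈ W ∧ b ∈ W ∧ r a b) v v

/-- A tournament: an irreflexive relation with exactly one arc between
every pair of distinct vertices. -/
def IsTournament {V : Type*} (r : V → V → Prop) : Prop :=
  (∀ v : V, ¬ r v v) ∧ ∀ u v : V, u ≠ v → (r u v ↔ ¬ r v u)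

/-- A feedback vertex set: its deletion leaves an acyclic digraph. -/
def IsFVS {V : Type*} (r : V → V → Prop) (F : Set V) : Prop :=
  AcyclicOn r Fᶜ

/-- A minimal feedback vertex set. -/
def IsMinimalFVS {V : Type*} (r : V → V → Prop) (F : Set V) : Prop :=
  IsFVS r F ∧ ∀ F' : Set V, F' ⊆ F → IsFVS r F' → F' = F

/-- A feedback vertex set of the subtournament induced on `S`. -/
def IsFVSOn {V : Type*} (r : V → V → Prop) (S F : Set V) : Prop :=
  F ⊆ S ∧ AcyclicOn r (S \ F)

/-- A minimal feedback vertex set of the subtournament induced on `S`. -/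
def IsMinimalFVSOn {V : Type*} (r : V → V → Prop) (S F : Set V) : Prop :=
  IsFVSOn r S F ∧ ∀ F' : Set V, F' ⊆ F → IsFVSOn r S F' → F' = F

/-- Strong (strongly connected): a directed path between any ordered pair. -/
def IsStrong {V : Type*} (r : V → V → Prop) : Prop :=
  ∀ u v : V, Relation.ReflTransGen r u v

/-- The subtournament induced on `S` is strong. -/
def IsStrongOn {V : Type*} (r : V → V → Prop) (S : Set V) : Prop :=
  ∀ u ∈ S, ∀ v ∈ S, Relation.ReflTransGen (fun a b => a ∈ S ∧ b ∈ S ∧ r a b) u v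

/-- The score (out-degree) of a vertex. -/
noncomputable def outScore {V : Type*} (r : V → V → Prop) (v : V) : ℕ :=
  {u : V | r v u}.ncard

/-- The number of minimal feedback vertex sets of a tournament. -/
noncomputable def fvsCount (V : Type*) (r : V → V → Prop) : ℕ :=
  {F : Set V | IsMinimalFVS r F}.ncard

/-- `maxMinFVS n` = maximum number of minimal FVSs over all `n`-vertex tournaments. -/
noncomputable def maxMinFVS (n : ℕ) : ℕ :=
  sSup {k : ℕ | ∃ r : Fin n → Fin n → Prop, IsTournament r ∧ fvsCount (Fin n) r = k}


lemma redei_insert {V : Type*} (r : V → V → Prop) (hT : IsTournament r) :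
    ∀ (l : List V) (v : V), v ∉ l → l.Nodup → l.Chain' r →
      ∃ l' : List V, l'.Nodup ∧ l'.Chain' r ∧ (∀ x, x ∈ l' ↔ x = v ∨ x ∈ l) ∧
        (l'.head? = some v ∨ l'.head? = l.head?) := by
  intro l
  induction l with
  | nil =>
    intro v _ _ _
    exact ⟨[v], List.nodup_singleton v, List.isChain_singleton v,
      by simp, Or.inl rfl⟩
  | cons a t ih =>
    intro v hv hnd hch
    have hva : v ≠ a := fun h => hv (h ▸ List.mem_cons_self)
    by_cases hr : r v a
    · refine ⟨v :: a :: t, ?_, ?_, by simp, Or.inl rfl⟩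
      · exact List.nodup_cons.2 ⟨hv, hnd⟩
      · exact List.isChain_cons_cons.2 ⟨hr, hch⟩
    · have hav : r a v := by
        have := (hT.2 a v (Ne.symm hva)).2
        by_contra h
        exact hr (((hT.2 v a hva)).2 (by
          intro h'; exact h (by exact h')))
      have hvt : v ∉ t := fun h => hv (List.mem_cons_of_mem a h)
      obtain ⟨l', hnd', hch', hmem', hhd'⟩ := ih v hvt (List.nodup_cons.1 hnd).2
        (List.isChain_cons.1 hch).2
      have hal' : a ∉ l' := by
        intro h
        rcases (hmem' a).1 h with h1 | h1
        · exact hT.1 v (h1 ▸ hav)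
        · exact (List.nodup_cons.1 hnd).1 h1
      refine ⟨a :: l', List.nodup_cons.2 ⟨hal', hnd'⟩, ?_, ?_, Or.inr rfl⟩
      · refine List.isChain_cons.2 ⟨?_, hch'⟩
        intro b hb
        rcases hhd' with h1 | h1
        · rw [h1] at hb; injection hb with hb; exact hb ▸ hav
        · rw [h1] at hb
          exact (List.isChain_cons.1 hch).1 b hb
      · intro x; simp [hmem' x]; tauto

theorem stmt16 {V : Type*} [Fintype V] (r : V → V → Prop) (hT : IsTournament r)
    (hn : 1 ≤ Fintype.card V) :
    ∃ l : List V, l.Nodup ∧ (∀ v : V, v ∈ l) ∧ l.Chain' r := by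
  have key : ∀ L : List V, L.Nodup →
      ∃ l : List V, l.Nodup ∧ l.Chain' r ∧ ∀ x, x ∈ l ↔ x ∈ L := by
    intro L
    induction L with
    | nil => exact fun _ => ⟨[], List.nodup_nil, List.isChain_nil, by simp⟩
    | cons a t ih =>
      intro hnd
      obtain ⟨l, hl1, hl2, hl3⟩ := ih (List.nodup_cons.1 hnd).2
      have ha : a ∉ l := fun h => (List.nodup_cons.1 hnd).1 ((hl3 a).1 h)
      obtain ⟨l', h1, h2, h3, _⟩ := redei_insert r hT l a ha hl1 hl2
      exact ⟨l', h1, h2, fun x => by simp [h3 x, hl3 x]⟩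
  obtain ⟨l, h1, h2, h3⟩ := key Finset.univ.toList (Finset.nodup_toList _)
  exact ⟨l, h1, fun v => (h3 v).2 (Finset.mem_toList.2 (Finset.mem_univ v)), h2⟩
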